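/- Let a, p, γ ∈ ℝ with p > 0 and γ > 0, let ω = ω' + iω'' ∈ ℂ with ω' > 0, and assume a − ω² − iωγ ≠ 0. Let ε(ω) = 1 + p/(a − ω² − iωγ). Then Im ε(ω) has the same sign as 2ω'' + γ; in particular, Im ε(ω) < 0 (effective gain) if and only if ω'' < −γ/2, Im ε(ω) = 0 if and only if ω'' = −γ/2, and Im ε(ω) > 0 (effective loss) if and only if ω'' > −γ/2. Thus a passive, lossy material can exhibit effective gain only under a temporally decaying (Im ω < 0) complex-frequency excitation. -/
import Mathlib


open Complex

/-- For a Lorentz–Drude permittivity `ε(ω) = 1 + p/(a − ω² − iωγ)` with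
`p > 0`, `γ > 0`, evaluated at `ω = ω' + iω''` with `ω' > 0` (nonzero denominator),
the sign of `Im ε(ω)` is that of `2ω'' + γ`: `Im ε(ω) < 0` (effective gain) iff
`ω'' < −γ/2`; `Im ε(ω) = 0` iff `ω'' = −γ/2`; and `Im ε(ω) > 0` (effective loss) iff
`ω'' > −γ/2`. Thus a passive, lossy material exhibits effective gain only under a
temporally decaying (`Im ω < 0`) complex-frequency excitation. -/
theorem sign_of_im_eps_lorentz_drude
    (a p γ : ℝ) (hp : 0 < p) (hγ : 0 < γ)
    (ω : ℂ) (hre : 0 < ω.re)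
    (hden : (a : ℂ) - ω ^ 2 - I * ω * (γ : ℂ) ≠ 0) :
    ((1 + (p : ℂ) / ((a : ℂ) - ω ^ 2 - I * ω * (γ : ℂ))).im < 0 ↔ ω.im < -γ / 2) ∧
    ((1 + (p : ℂ) / ((a : ℂ) - ω ^ 2 - I * ω * (γ : ℂ))).im = 0 ↔ ω.im = -γ / 2) ∧
    (0 < (1 + (p : ℂ) / ((a : ℂ) - ω ^ 2 - I * ω * (γ : ℂ))).im ↔ -γ / 2 < ω.im) := by
  set D : ℂ := (a : ℂ) - ω ^ 2 - I * ω * (γ : ℂ) with hD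
  have hns : 0 < Complex.normSq D := Complex.normSq_pos.mpr hden
  have hc : 0 < p * ω.re := mul_pos hp hre
  have him : (1 + (p : ℂ) / D).im = p * ω.re * (2 * ω.im + γ) / Complex.normSq D := by
    rw [Complex.add_im, Complex.div_im]
    simp only [hD, Complex.sub_im, Complex.sub_re, Complex.ofReal_im, Complex.ofReal_re,
      Complex.mul_im, Complex.mul_re, Complex.I_re, Complex.I_im, Complex.one_im, pow_two]
    ring
  rw [him]
  refine ⟨?_, ?_, ?_⟩
  · rw [div_lt_iff₀ hns, zero_mul]
    constructor
    · intro h; nlinarith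
    · intro h; nlinarith
  · rw [div_eq_zero_iff]
    constructor
    · rintro (h | h)
      · rcases mul_eq_zero.mp h with h' | h'
        · exact absurd h' (ne_of_gt hc)
        · linarith
      · exact absurd h (ne_of_gt hns)
    · intro h; left; nlinarith
  · rw [lt_div_iff₀ hns, zero_mul]
    constructor
    · intro h; nlinarith
    · intro h; nlinarith
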